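/- Let m, n be integers with m > n ≥ 1 and gcd(m,n) = 1, and let ε, δ ∈ {1,−1}. If 4n² ≡ δ (mod 2mn+ε), i.e. (2mn+ε) divides (4n² − δ), then n = 1 (and moreover m ≤ 3). -/

import Mathlib

theorem stmt_5 (m n : ℤ) (hmn : m > n) (hn : n ≥ 1) (hgcd : Int.gcd m n = 1)
    (ε δ : ℤ) (hε : ε = 1 ∨ ε = -1) (hδ : δ = 1 ∨ δ = -1)
    (h : (2 * m * n + ε) ∣ (4 * n ^ 2 - δ)) :
    n = 1 ∧ m ≤ 3 := by
  have hm2 : m ≥ 2 := by omega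
  have hε2 : ε ^ 2 = 1 := by rcases hε with h' | h' <;> simp [h']
  have hδ2 : δ ^ 2 = 1 := by rcases hδ with h' | h' <;> simp [h']
  have hεb : -1 ≤ ε ∧ ε ≤ 1 := by rcases hε with h' | h' <;> simp [h']
  have hδb : -1 ≤ δ ∧ δ ≤ 1 := by rcases hδ with h' | h' <;> simp [h']
  have hmn2 : 2 * 1 ≤ m * n :=
    mul_le_mul hm2 hn (by norm_num) (by linarith)
  have hkpos : 0 < 2 * m * n + ε := by
    have : 2 * m * n = 2 * (m * n) := by ring
    linarith [hεb.1]
  -- k ∣ 4m²n² - 1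
  have e1 : (2 * m * n + ε) ∣ (4 * m ^ 2 * n ^ 2 - 1) :=
    ⟨2 * m * n - ε, by linear_combination hε2⟩
  have e2 : (2 * m * n + ε) ∣ m ^ 2 * (4 * n ^ 2 - δ) := Dvd.dvd.mul_left h _
  have e3 : (2 * m * n + ε) ∣ (δ * m ^ 2 - 1) := by
    have h' := dvd_sub e1 e2
    have heq : 4 * m ^ 2 * n ^ 2 - 1 - m ^ 2 * (4 * n ^ 2 - δ) = δ * m ^ 2 - 1 := by ring
    rwa [heq] at h'
  have e4 : (2 * m * n + ε) ∣ (m ^ 2 - δ) := by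
    have h' := Dvd.dvd.mul_left e3 δ
    have heq : δ * (δ * m ^ 2 - 1) = m ^ 2 - δ := by linear_combination m ^ 2 * hδ2
    rwa [heq] at h'
  -- size bounds
  have b1 : 2 * m * n + ε ≤ m ^ 2 - δ := by
    apply Int.le_of_dvd _ e4
    nlinarith [sq_nonneg (m - 2), hδb.2]
  have b2 : 2 * m * n + ε ≤ 4 * n ^ 2 - δ := by
    apply Int.le_of_dvd _ h
    nlinarith [sq_nonneg (n - 1), hδb.2]
  have hn1 : n = 1 := by
    by_contra hne
    have hn2 : n ≥ 2 := by omega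
    have hle : m ≤ 2 * n := by
      by_contra hc
      push_neg at hc
      have hp : (2 * n + 1) * n ≤ m * n :=
        mul_le_mul_of_nonneg_right (by linarith) (by linarith)
      nlinarith [hεb.1, hδb.1]
    have hge : 2 * n ≤ m := by
      by_contra hc
      push_neg at hc
      have hp : m * m ≤ m * (2 * n - 1) :=
        mul_le_mul_of_nonneg_left (by linarith) (by linarith)
      nlinarith [hεb.1, hδb.1]
    have hm : m = 2 * n := le_antisymm hle hge
    have hd : n ∣ m := ⟨2, by omega⟩
    have hdg : n ∣ (Int.gcd m n : ℤ) := Int.dvd_coe_gcd hd dvd_rfl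
    rw [hgcd] at hdg
    have := Int.le_of_dvd (by norm_num) hdg
    omega
  subst hn1
  refine ⟨rfl, ?_⟩
  have := b2
  linarith [hεb.1, hδb.1]
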